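/- Let ω = 𝕂^ℕ with the product topology (𝕂 = ℝ or ℂ). Then GL(ω) acts transitively on the set of dense countably infinite-dimensional linear subspaces of ω: for any two dense linear subspaces E and F of ω of countably infinite dimension, there exists a continuous linear automorphism T of ω (with continuous inverse) such that T(E) = F. -/

import Mathlib

noncomputable section

section OmegaTransAux
open Finset Submodule
set_option synthInstance.maxHeartbeats 1000000
set_option linter.unusedVariables false
set_option linter.unnecessarySimpa false

variable {𝕜 : Type*} [Field 𝕜]
/-- Gaussian-elimination residual: subtract multiples of `e 0, ..., e (n-1)` from `x`. -/
def tres (e : ℕ → ℕ → 𝕜) : ℕ → (ℕ → 𝕜) → (ℕ → 𝕜)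
  | 0, x => x
  | n+1, x => tres e n x - (tres e n x n / e n n) • e n

lemma tres_congr {e e' : ℕ → ℕ → 𝕜} {n : ℕ} (h : ∀ i < n, e i = e' i) (x : ℕ → 𝕜) :
    tres e n x = tres e' n x := by
  induction n with
  | zero => rfl
  | succ n ih =>
      have h' : ∀ i < n, e i = e' i := fun i hi => h i (hi.trans (Nat.lt_succ_self n))
      simp only [tres, ih h', h n (Nat.lt_succ_self n)]

lemma tres_sub_mem (e : ℕ → ℕ → 𝕜) (n : ℕ) (x : ℕ → 𝕜) :
    x - tres e n x ∈ span 𝕜 (e '' Set.Iio n) := by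
  induction n with
  | zero => simpa [tres] using Submodule.zero_mem _
  | succ n ih =>
      have h1 : x - tres e (n+1) x
          = (x - tres e n x) + (tres e n x n / e n n) • e n := by
        simp [tres]; abel
      rw [h1]
      refine add_mem (Submodule.span_mono (Set.image_mono ?_) ih)
        (Submodule.smul_mem _ _ (Submodule.subset_span ⟨n, by simp, rfl⟩))
      exact fun i hi => lt_trans hi (Nat.lt_succ_self n)

lemma tres_coord (e : ℕ → ℕ → 𝕜) (n : ℕ) (x : ℕ → 𝕜)
    (htri : ∀ i < n, ∀ k < i, e i k = 0) (hdiag : ∀ i < n, e i i ≠ 0) :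
    ∀ k < n, tres e n x k = 0 := by
  induction n with
  | zero => intro k hk; omega
  | succ n ih =>
      intro j hj
      have htri' : ∀ i < n, ∀ k < i, e i k = 0 := fun i hi => htri i (hi.trans (Nat.lt_succ_self n))
      have hdiag' : ∀ i < n, e i i ≠ 0 := fun i hi => hdiag i (hi.trans (Nat.lt_succ_self n))
      rcases Nat.lt_or_ge j n with hkn | hkn
      · have h0 := ih htri' hdiag' j hkn
        have h2 : e n j = 0 := htri n (Nat.lt_succ_self n) j hkn
        simp [tres, h0, h2]
      · have hk' : j = n := by omega
        subst hk'
        simp [tres, div_mul_cancel₀ _ (hdiag j (Nat.lt_succ_self j))]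

open Classical in
def ebuild (bv w : ℕ → ℕ → 𝕜) : ℕ → ℕ → 𝕜
  | n =>
    let prev : ℕ → ℕ → 𝕜 := fun i => if h : i < n then ebuild bv w i else 0
    let m := sInf {m | bv m ∉ span 𝕜 (prev '' Set.Iio n)}
    let r := tres prev n (bv m)
    if r n ≠ 0 then r else w n
decreasing_by exact h

open Classical in
lemma ebuild_eq (bv w : ℕ → ℕ → 𝕜) (n : ℕ) :
    ebuild bv w n =
      (if tres (ebuild bv w) n
            (bv (sInf {m | bv m ∉ span 𝕜 (ebuild bv w '' Set.Iio n)})) n ≠ 0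
       then tres (ebuild bv w) n
            (bv (sInf {m | bv m ∉ span 𝕜 (ebuild bv w '' Set.Iio n)}))
       else w n) := by
  rw [ebuild]
  have hprev : ∀ i < n, (fun i => if _ : i < n then ebuild bv w i else 0) i = ebuild bv w i :=
    fun i hi => dif_pos hi
  have himg : (fun i => if _ : i < n then ebuild bv w i else 0) '' Set.Iio n
      = ebuild bv w '' Set.Iio n := Set.image_congr (fun i hi => hprev i hi)
  rw [tres_congr hprev, himg]

lemma ebuild_tri (bv w : ℕ → ℕ → 𝕜)
    (hwtri : ∀ n, ∀ k < n, w n k = 0) (hwdiag : ∀ n, w n n ≠ 0) :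
    ∀ n, (∀ k < n, ebuild bv w n k = 0) ∧ ebuild bv w n n ≠ 0 := by
  intro n
  induction n using Nat.strong_induction_on with
  | _ n ih =>
    have htri : ∀ i < n, ∀ k < i, ebuild bv w i k = 0 := fun i hi => (ih i hi).1
    have hdiag : ∀ i < n, ebuild bv w i i ≠ 0 := fun i hi => (ih i hi).2
    rw [ebuild_eq]
    set x := bv (sInf {m | bv m ∉ span 𝕜 (ebuild bv w '' Set.Iio n)}) with hx
    by_cases hr : tres (ebuild bv w) n x n ≠ 0
    · rw [if_pos hr]
      exact ⟨fun k hk => tres_coord _ n x htri hdiag k hk, hr⟩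
    · rw [if_neg hr]
      exact ⟨fun k hk => hwtri n k hk, hwdiag n⟩

lemma ebuild_mem (bv w : ℕ → ℕ → 𝕜) (E : Submodule 𝕜 (ℕ → 𝕜))
    (hbv : ∀ m, bv m ∈ E) (hw : ∀ n, w n ∈ E) :
    ∀ n, ebuild bv w n ∈ E := by
  intro n
  induction n using Nat.strong_induction_on with
  | _ n ih =>
    have hspan : span 𝕜 (ebuild bv w '' Set.Iio n) ≤ E := by
      rw [Submodule.span_le]
      rintro _ ⟨i, hi, rfl⟩
      exact ih i hi
    rw [ebuild_eq]
    set m := sInf {m | bv m ∉ span 𝕜 (ebuild bv w '' Set.Iio n)} with hm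
    by_cases hr : tres (ebuild bv w) n (bv m) n ≠ 0
    · rw [if_pos hr]
      have h1 : bv m - tres (ebuild bv w) n (bv m) ∈ E :=
        hspan (tres_sub_mem _ n (bv m))
      have := sub_mem (hbv m) h1
      simpa using this
    · rw [if_neg hr]; exact hw n

lemma ebuild_absorb (bv w : ℕ → ℕ → 𝕜)
    (hwtri : ∀ n, ∀ k < n, w n k = 0) (hwdiag : ∀ n, w n n ≠ 0) :
    ∀ m, ∃ n, bv m ∈ span 𝕜 (ebuild bv w '' Set.Iio n) := by
  set e := ebuild bv w with he
  have htri : ∀ i, ∀ k < i, e i k = 0 := fun i => (ebuild_tri bv w hwtri hwdiag i).1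
  have hdiag : ∀ i, e i i ≠ 0 := fun i => (ebuild_tri bv w hwtri hwdiag i).2
  have hmono : ∀ {n n' : ℕ}, n ≤ n' →
      span 𝕜 (e '' Set.Iio n) ≤ span 𝕜 (e '' Set.Iio n') :=
    fun h => Submodule.span_mono (Set.image_mono (Set.Iio_subset_Iio h))
  by_contra hcon
  push_neg at hcon
  obtain ⟨m₁, hm₁⟩ := hcon
  have hbadne : {m | ∀ n, bv m ∉ span 𝕜 (e '' Set.Iio n)}.Nonempty := ⟨m₁, hm₁⟩
  set m₀ := sInf {m | ∀ n, bv m ∉ span 𝕜 (e '' Set.Iio n)} with hm₀def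
  have hm₀ : ∀ n, bv m₀ ∉ span 𝕜 (e '' Set.Iio n) := Nat.sInf_mem hbadne
  have hsmall : ∀ m, m < m₀ → ∃ n, bv m ∈ span 𝕜 (e '' Set.Iio n) := by
    intro m hm
    by_contra h'
    push_neg at h'
    exact absurd (Nat.sInf_le (show m ∈ {m | ∀ n, bv m ∉ span 𝕜 (e '' Set.Iio n)} from h')) (not_le.mpr hm)
  choose g hg using hsmall
  set N := (Finset.range m₀).attach.sup (fun m => g m.1 (Finset.mem_range.mp m.2)) with hNdef
  have hN : ∀ m (h : m < m₀), g m h ≤ N :=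
    fun m h => Finset.le_sup (f := fun m => g m.1 (Finset.mem_range.mp m.2)) (Finset.mem_attach _ ⟨m, Finset.mem_range.mpr h⟩)
  have hMn : ∀ n, N ≤ n → sInf {m | bv m ∉ span 𝕜 (e '' Set.Iio n)} = m₀ := by
    intro n hn
    have hmem : m₀ ∈ {m | bv m ∉ span 𝕜 (e '' Set.Iio n)} := hm₀ n
    refine le_antisymm (Nat.sInf_le hmem) ?_
    by_contra hlt
    push_neg at hlt
    have hkmem := Nat.sInf_mem (⟨m₀, hmem⟩ :
      {m | bv m ∉ span 𝕜 (e '' Set.Iio n)}.Nonempty)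
    exact hkmem (hmono ((hN _ hlt).trans hn) (hg _ hlt))
  have hzero : ∀ n, N ≤ n → tres e n (bv m₀) n = 0 := by
    intro n hn
    by_contra hne
    have heq := ebuild_eq bv w n
    rw [← he, hMn n hn, if_pos hne] at heq
    have hmem : bv m₀ ∈ span 𝕜 (e '' Set.Iio (n+1)) := by
      have h1 : bv m₀ - tres e n (bv m₀) ∈ span 𝕜 (e '' Set.Iio (n+1)) :=
        hmono (Nat.le_succ n) (tres_sub_mem e n (bv m₀))
      have h2 : tres e n (bv m₀) ∈ span 𝕜 (e '' Set.Iio (n+1)) :=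
        Submodule.subset_span ⟨n, Nat.lt_succ_self n, heq⟩
      have := add_mem h1 h2
      simpa using this
    exact hm₀ (n+1) hmem
  have hconst : ∀ n, N ≤ n → tres e n (bv m₀) = tres e N (bv m₀) := by
    intro n hn
    induction n, hn using Nat.le_induction with
    | base => rfl
    | succ n hn ih =>
        have h0 := hzero n hn
        have hstep : tres e (n+1) (bv m₀)
            = tres e n (bv m₀) - (tres e n (bv m₀) n / e n n) • e n := rfl
        rw [hstep, h0, zero_div, zero_smul, sub_zero, ih]
  have hres0 : tres e N (bv m₀) = 0 := by
    funext k
    have hn : N ≤ max N (k+1) := le_max_left _ _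
    have := hconst _ hn
    rw [← this]
    exact tres_coord e _ (bv m₀) (fun i _ => htri i) (fun i _ => hdiag i) k
      (lt_of_lt_of_le (Nat.lt_succ_self k) (le_max_right _ _))
  have : bv m₀ ∈ span 𝕜 (e '' Set.Iio N) := by
    have := tres_sub_mem e N (bv m₀)
    rwa [hres0, sub_zero] at this
  exact hm₀ N this


section RC
set_option synthInstance.maxHeartbeats 1000000
variable {𝕜 : Type*} [RCLike 𝕜]

variable {𝕜 : Type*} [RCLike 𝕜]

lemma dense_pivot (E : Submodule 𝕜 (ℕ → 𝕜)) (hE : Dense (E : Set (ℕ → 𝕜))) (n : ℕ) :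
    ∃ v ∈ E, (∀ k < n, v k = 0) ∧ v n = 1 := by
  set L : (ℕ → 𝕜) →ₗ[𝕜] (Fin (n+1) → 𝕜) := LinearMap.funLeft 𝕜 𝕜 Fin.val with hL
  have hLc : Continuous L := continuous_pi fun i => continuous_apply _
  have hLs : Function.Surjective L :=
    LinearMap.funLeft_surjective_of_injective 𝕜 𝕜 _ Fin.val_injective
  have hclosed : IsClosed ((E.map L : Submodule 𝕜 (Fin (n+1) → 𝕜)) : Set (Fin (n+1) → 𝕜)) :=
    Submodule.closed_of_finiteDimensional _
  have htop : (E.map L : Set (Fin (n+1) → 𝕜)) = Set.univ := by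
    have h1 : L '' closure (E : Set (ℕ → 𝕜)) ⊆ closure (L '' (E : Set (ℕ → 𝕜))) :=
      image_closure_subset_closure_image hLc
    rw [hE.closure_eq] at h1
    have h2 : Set.univ ⊆ closure (L '' (E : Set (ℕ → 𝕜))) := by
      rw [← Set.image_univ_of_surjective hLs]; exact h1
    have h3 : (E.map L : Set (Fin (n+1) → 𝕜)) = L '' (E : Set (ℕ → 𝕜)) := rfl
    rw [h3]
    have := hclosed.closure_eq
    rw [h3] at this
    exact Set.eq_univ_of_univ_subset (by rw [← this]; exact h2)
  have hmem : Pi.single (Fin.last n) (1:𝕜) ∈ E.map L := by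
    have : Pi.single (Fin.last n) (1:𝕜) ∈ (E.map L : Set (Fin (n+1) → 𝕜)) := by
      rw [htop]; trivial
    exact this
  obtain ⟨v, hv, hveq⟩ := hmem
  refine ⟨v, hv, ?_, ?_⟩
  · intro k hk
    have h1 : L v ⟨k, by omega⟩ = (Pi.single (Fin.last n) (1:𝕜) : Fin (n+1) → 𝕜) ⟨k, by omega⟩ := by rw [hveq]
    have h2 : (⟨k, by omega⟩ : Fin (n+1)) ≠ Fin.last n := by
      intro h; apply_fun Fin.val at h; simp at h; omega
    simpa [hL, LinearMap.funLeft, Pi.single_apply, h2] using h1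
  · have h1 : L v (Fin.last n) = (Pi.single (Fin.last n) (1:𝕜) : Fin (n+1) → 𝕜) (Fin.last n) := by rw [hveq]
    simpa [hL, LinearMap.funLeft, Fin.last] using h1

lemma exists_triangular_basis (E : Submodule 𝕜 (ℕ → 𝕜)) (hE : Dense (E : Set (ℕ → 𝕜)))
    (hdim : Nonempty (Module.Basis ℕ 𝕜 E)) :
    ∃ e : ℕ → ℕ → 𝕜, (∀ n, ∀ k < n, e n k = 0) ∧ (∀ n, e n n ≠ 0) ∧
      span 𝕜 (Set.range e) = E := by
  obtain ⟨b⟩ := hdim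
  set bv : ℕ → ℕ → 𝕜 := fun m => ((b m : E) : ℕ → 𝕜) with hbv
  have hwex : ∀ n : ℕ, ∃ v, v ∈ E ∧ (∀ k < n, v k = 0) ∧ v n = 1 := by
    intro n
    obtain ⟨v, hv, h1, h2⟩ := dense_pivot E hE n
    exact ⟨v, hv, h1, h2⟩
  choose w hwmem hwtri hwdiag using hwex
  have hwd : ∀ n, w n n ≠ 0 := fun n => by rw [hwdiag n]; exact one_ne_zero
  refine ⟨ebuild bv w, fun n => (ebuild_tri bv w hwtri hwd n).1,
    fun n => (ebuild_tri bv w hwtri hwd n).2, ?_⟩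
  have hbvmem : ∀ m, bv m ∈ E := fun m => (b m).2
  apply le_antisymm
  · rw [Submodule.span_le]
    rintro _ ⟨n, rfl⟩
    exact ebuild_mem bv w E hbvmem hwmem n
  · have hbvspan : span 𝕜 (Set.range bv) = E := by
      have h1 : span 𝕜 (Set.range bv) = Submodule.map E.subtype (span 𝕜 (Set.range b)) := by
        rw [Submodule.map_span, ← Set.range_comp]
        rfl
      rw [h1, b.span_eq, Submodule.map_subtype_top]
    rw [← hbvspan, Submodule.span_le]
    rintro _ ⟨m, rfl⟩
    obtain ⟨n, hn⟩ := ebuild_absorb bv w hwtri hwd m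
    exact Submodule.span_mono (Set.image_subset_range _ _) hn
end RC
/-- Lower-triangular "matrix" action: `(Amap e a) k = ∑_{i ≤ k} a i * e i k`. -/
def Amap (e : ℕ → ℕ → 𝕜) : (ℕ → 𝕜) →ₗ[𝕜] (ℕ → 𝕜) where
  toFun a := fun k => ∑ i ∈ Finset.range (k+1), a i * e i k
  map_add' a b := by
    funext k
    simp [add_mul, Finset.sum_add_distrib]
  map_smul' c a := by
    funext k
    simp [Finset.mul_sum, mul_assoc]

/-- Inverse by forward substitution. -/
def Bfun (e : ℕ → ℕ → 𝕜) (y : ℕ → 𝕜) : ℕ → 𝕜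
  | k => (e k k)⁻¹ * (y k - ∑ i ∈ (Finset.range k).attach, Bfun e y i * e i k)
decreasing_by exact Finset.mem_range.mp i.2

lemma Bfun_eq (e : ℕ → ℕ → 𝕜) (y : ℕ → 𝕜) (k : ℕ) :
    Bfun e y k = (e k k)⁻¹ * (y k - ∑ i ∈ Finset.range k, Bfun e y i * e i k) := by
  rw [Bfun, Finset.sum_attach (Finset.range k) (fun i => Bfun e y i * e i k)]

lemma Amap_Bfun (e : ℕ → ℕ → 𝕜) (hdiag : ∀ i, e i i ≠ 0) (y : ℕ → 𝕜) :
    Amap e (Bfun e y) = y := by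
  funext k
  show ∑ i ∈ Finset.range (k+1), Bfun e y i * e i k = y k
  rw [Finset.sum_range_succ, Bfun_eq, inv_mul_eq_div, div_mul_cancel₀ _ (hdiag k)]
  ring

lemma Bfun_Amap (e : ℕ → ℕ → 𝕜) (hdiag : ∀ i, e i i ≠ 0) (a : ℕ → 𝕜) :
    ∀ k, Bfun e (Amap e a) k = a k := by
  intro k
  induction k using Nat.strong_induction_on with
  | _ k ih =>
    rw [Bfun_eq]
    have h1 : ∑ i ∈ Finset.range k, Bfun e (Amap e a) i * e i k
        = ∑ i ∈ Finset.range k, a i * e i k :=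
      Finset.sum_congr rfl fun i hi => by rw [ih i (Finset.mem_range.mp hi)]
    rw [h1]
    show (e k k)⁻¹ * ((∑ i ∈ Finset.range (k+1), a i * e i k) - _) = a k
    rw [Finset.sum_range_succ]
    field_simp [hdiag k]
    ring

lemma Bfun_add (e : ℕ → ℕ → 𝕜) (y z : ℕ → 𝕜) :
    ∀ k, Bfun e (y + z) k = Bfun e y k + Bfun e z k := by
  intro k
  induction k using Nat.strong_induction_on with
  | _ k ih =>
    rw [Bfun_eq, Bfun_eq, Bfun_eq]
    have h1 : ∑ i ∈ Finset.range k, Bfun e (y + z) i * e i k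
        = ∑ i ∈ Finset.range k, (Bfun e y i * e i k + Bfun e z i * e i k) :=
      Finset.sum_congr rfl fun i hi => by
        rw [ih i (Finset.mem_range.mp hi)]; ring
    rw [h1, Finset.sum_add_distrib]
    simp [Pi.add_apply]
    ring

lemma Bfun_smul (e : ℕ → ℕ → 𝕜) (c : 𝕜) (y : ℕ → 𝕜) :
    ∀ k, Bfun e (c • y) k = c * Bfun e y k := by
  intro k
  induction k using Nat.strong_induction_on with
  | _ k ih =>
    rw [Bfun_eq, Bfun_eq]
    have h1 : ∑ i ∈ Finset.range k, Bfun e (c • y) i * e i k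
        = ∑ i ∈ Finset.range k, c * (Bfun e y i * e i k) :=
      Finset.sum_congr rfl fun i hi => by
        rw [ih i (Finset.mem_range.mp hi)]; ring
    rw [h1, ← Finset.mul_sum]
    simp [Pi.smul_apply, smul_eq_mul]
    ring


lemma Amap_single (e : ℕ → ℕ → 𝕜) (htri : ∀ i, ∀ k < i, e i k = 0) (n : ℕ) :
    Amap e (Pi.single n 1) = e n := by
  funext k
  show ∑ i ∈ Finset.range (k+1), (Pi.single n 1 : ℕ → 𝕜) i * e i k = e n k
  have h1 : ∀ i, (Pi.single n 1 : ℕ → 𝕜) i * e i k = if i = n then e i k else 0 := by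
    intro i
    rcases eq_or_ne i n with rfl | h
    · simp [Pi.single_eq_same]
    · simp [Pi.single_eq_of_ne h, h]
  simp only [h1]
  rw [Finset.sum_ite_eq' (Finset.range (k+1)) n (fun i => e i k)]
  rcases Nat.lt_or_ge k n with hkn | hkn
  · rw [if_neg (by simp; omega), htri n k hkn]
  · rw [if_pos (by simp; omega)]

section RC2
variable {𝕜 : Type*} [RCLike 𝕜]

lemma Amap_continuous (e : ℕ → ℕ → 𝕜) : Continuous (Amap e) := by
  apply continuous_pi
  intro k
  show Continuous fun a : ℕ → 𝕜 => ∑ i ∈ Finset.range (k+1), a i * e i k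
  exact continuous_finset_sum _ fun i _ => (continuous_apply i).mul continuous_const

lemma Bfun_continuous (e : ℕ → ℕ → 𝕜) : ∀ k, Continuous fun y => Bfun e y k := by
  intro k
  induction k using Nat.strong_induction_on with
  | _ k ih =>
    have h1 : (fun y => Bfun e y k)
        = fun y => (e k k)⁻¹ * (y k - ∑ i ∈ Finset.range k, Bfun e y i * e i k) := by
      funext y; rw [Bfun_eq]
    rw [h1]
    exact continuous_const.mul ((continuous_apply k).sub
      (continuous_finset_sum _ fun i hi =>
        (ih i (Finset.mem_range.mp hi)).mul continuous_const))

/-- The continuous linear automorphism of `𝕜^ℕ` given by a lower-triangular family with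
nonzero diagonal. -/
def Tequiv (e : ℕ → ℕ → 𝕜) (hdiag : ∀ i, e i i ≠ 0) : (ℕ → 𝕜) ≃L[𝕜] (ℕ → 𝕜) where
  toLinearEquiv :=
    { Amap e with
      invFun := Bfun e
      left_inv := fun a => funext (Bfun_Amap e hdiag a)
      right_inv := fun y => Amap_Bfun e hdiag y }
  continuous_toFun := Amap_continuous e
  continuous_invFun := by
    apply continuous_pi
    exact Bfun_continuous e

lemma Tequiv_single (e : ℕ → ℕ → 𝕜) (htri : ∀ i, ∀ k < i, e i k = 0)
    (hdiag : ∀ i, e i i ≠ 0) (n : ℕ) :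
    Tequiv e hdiag (Pi.single n 1) = e n := Amap_single e htri n

end RC2

end OmegaTransAux

open Submodule in
private lemma tequiv_image_span {𝕜 : Type*} [RCLike 𝕜] (e : ℕ → ℕ → 𝕜)
    (htri : ∀ i, ∀ k < i, e i k = 0) (hdiag : ∀ i, e i i ≠ 0)
    (G : Submodule 𝕜 (ℕ → 𝕜)) (hspan : span 𝕜 (Set.range e) = G) :
    ⇑(Tequiv e hdiag) ''
      ↑(span 𝕜 (Set.range fun n => (Pi.single n 1 : ℕ → 𝕜))) = (G : Set (ℕ → 𝕜)) := by
  set f : (ℕ → 𝕜) →ₗ[𝕜] (ℕ → 𝕜) := (Tequiv e hdiag).toLinearEquiv.toLinearMap with hf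
  have hcoe : ⇑f = ⇑(Tequiv e hdiag) := rfl
  have h1 := Submodule.map_span f (Set.range fun n => (Pi.single n 1 : ℕ → 𝕜))
  have h2 : ⇑f '' (Set.range fun n => (Pi.single n 1 : ℕ → 𝕜)) = Set.range e := by
    rw [← Set.range_comp]
    have hfun : (⇑f ∘ fun n => (Pi.single n 1 : ℕ → 𝕜)) = e := by
      funext n
      show f (Pi.single n 1) = e n
      rw [hcoe]
      exact Tequiv_single e htri hdiag n
    rw [hfun]
  have h3 : ↑(Submodule.map f (span 𝕜 (Set.range fun n => (Pi.single n 1 : ℕ → 𝕜))))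
      = ⇑f '' ↑(span 𝕜 (Set.range fun n => (Pi.single n 1 : ℕ → 𝕜))) :=
    Submodule.map_coe f _
  rw [← hcoe, ← h3, h1, h2, hspan]

/-- `GL(ω)` acts transitively on the set of dense countably
infinite-dimensional linear subspaces of `ω = 𝕜^ℕ` with the product topology. -/
theorem omega_transitive_on_dense_countable_dim_subspaces
    (𝕜 : Type*) [RCLike 𝕜]
    (E F : Submodule 𝕜 (ℕ → 𝕜))
    (hE : Dense (E : Set (ℕ → 𝕜))) (hF : Dense (F : Set (ℕ → 𝕜)))
    (hEdim : Nonempty (Module.Basis ℕ 𝕜 E)) (hFdim : Nonempty (Module.Basis ℕ 𝕜 F)) :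
    ∃ T : (ℕ → 𝕜) ≃L[𝕜] (ℕ → 𝕜), T '' (E : Set (ℕ → 𝕜)) = (F : Set (ℕ → 𝕜)) := by
  obtain ⟨eE, hEtri, hEdiag, hEspan⟩ := exists_triangular_basis E hE hEdim
  obtain ⟨eF, hFtri, hFdiag, hFspan⟩ := exists_triangular_basis F hF hFdim
  set TE := Tequiv eE hEdiag with hTE
  set TF := Tequiv eF hFdiag with hTF
  have hPE := tequiv_image_span eE hEtri hEdiag E hEspan
  have hPF := tequiv_image_span eF hFtri hFdiag F hFspan
  refine ⟨TE.symm.trans TF, ?_⟩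
  have hcoe : ⇑(TE.symm.trans TF) = ⇑TF ∘ ⇑TE.symm := rfl
  rw [hcoe, Set.image_comp]
  have hsymm : ⇑TE.symm '' (E : Set (ℕ → 𝕜))
      = ↑(Submodule.span 𝕜 (Set.range fun n => (Pi.single n 1 : ℕ → 𝕜))) := by
    rw [← hPE]
    exact TE.toEquiv.symm_image_image _
  rw [hsymm, hPF]
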